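/- The minimum error probability over non-signalling codes of size M for channel E satisfies the duality: min over feasible (R,p) of 1 − ∑_{x,y} E(y|x)R(x,y) (primal constraints: ∑_x R(x,y) ≤ 1/M, 0 ≤ R(x,y) ≤ p(x), ∑_x p(x) = 1, p ≥ 0) equals max over z : B → ℝ of min over x ∈ A of ∑_y ( min{z(y), E(y|x)} − z(y)/M ). -/

import Mathlib

section Aux
variable {A B : Type*} [Fintype A] [Fintype B] [Nonempty A]

/-- Weak duality. -/
lemma stmt7_weak (E : A → B → ℝ) (hEpos : ∀ x y, 0 ≤ E x y) (hEsum : ∀ x, ∑ y, E x y = 1)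
    (M : ℝ) (hM : 1 ≤ M) (z : B → ℝ) (R : A → B → ℝ) (p : A → ℝ)
    (hR0 : ∀ x y, 0 ≤ R x y) (hp0 : ∀ x, 0 ≤ p x) (hRp : ∀ x y, R x y ≤ p x)
    (hps : ∑ x, p x = 1) (hRM : ∀ y, ∑ x, R x y ≤ 1 / M) :
    (⨅ x : A, ∑ y, (min (z y) (E x y) - z y / M)) ≤ 1 - ∑ x, ∑ y, E x y * R x y := by
  have hM0 : (0:ℝ) < M := lt_of_lt_of_le one_pos hM
  have hinv : 1 / M ≤ 1 := by rw [div_le_one hM0]; exact hM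
  set z' : B → ℝ := fun y => max (z y) 0 with hz'
  have hz'0 : ∀ y, 0 ≤ z' y := fun y => le_max_right _ _
  have hterm : ∀ x y, min (z y) (E x y) - z y / M ≤ min (z' y) (E x y) - z' y / M := by
    intro x y
    rcases le_or_gt 0 (z y) with h | h
    · have hzz : z' y = z y := max_eq_left h
      rw [hzz]
    · have h1 : z' y = 0 := max_eq_right h.le
      have h2 : min (z y) (E x y) = z y := min_eq_left (h.le.trans (hEpos x y))
      have h3 : min ((0:ℝ)) (E x y) = 0 := min_eq_left (hEpos x y)
      rw [h1, h2, h3]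
      have k1 : z y * M ≤ z y * 1 := mul_le_mul_of_nonpos_left hM h.le
      have k2 : z y ≤ z y / M := by rw [le_div_iff₀ hM0]; linarith
      simp only [zero_div, sub_zero]
      linarith
  set m : ℝ := ⨅ x : A, ∑ y, (min (z y) (E x y) - z y / M) with hm
  have hmle : ∀ x : A, m ≤ ∑ y, (min (z' y) (E x y) - z' y / M) := by
    intro x
    refine le_trans (ciInf_le (Set.finite_range _).bddBelow x) ?_
    exact Finset.sum_le_sum fun y _ => hterm x y
  -- main estimate on the primal objective
  have key2 : ∀ x y, E x y * R x y ≤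
      (E x y - min (z' y) (E x y)) * p x + min (z' y) (E x y) * R x y := by
    intro x y
    have h1 : 0 ≤ (E x y - min (z' y) (E x y)) * (p x - R x y) :=
      mul_nonneg (by simp [min_le_right]) (by linarith [hRp x y])
    nlinarith [h1]
  have hsum1 : ∀ x, ∑ y, (E x y - min (z' y) (E x y)) * p x
      = p x - ∑ y, p x * min (z' y) (E x y) := by
    intro x
    simp only [sub_mul, Finset.sum_sub_distrib, ← Finset.sum_mul, hEsum x, one_mul]
    congr 1
    rw [Finset.sum_mul]
    exact Finset.sum_congr rfl fun y _ => mul_comm _ _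
  have hsum2 : ∑ x, ∑ y, min (z' y) (E x y) * R x y ≤ ∑ y, z' y / M := by
    rw [Finset.sum_comm]
    refine Finset.sum_le_sum fun y _ => ?_
    calc ∑ x, min (z' y) (E x y) * R x y
        ≤ ∑ x, z' y * R x y :=
          Finset.sum_le_sum fun x _ => mul_le_mul_of_nonneg_right (min_le_left _ _) (hR0 x y)
      _ = z' y * ∑ x, R x y := (Finset.mul_sum _ _ _).symm
      _ ≤ z' y * (1/M) := mul_le_mul_of_nonneg_left (hRM y) (hz'0 y)
      _ = z' y / M := by ring
  have hobj : ∑ x, ∑ y, E x y * R x y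
      ≤ (1 - ∑ x, ∑ y, p x * min (z' y) (E x y)) + ∑ y, z' y / M := by
    calc ∑ x, ∑ y, E x y * R x y
        ≤ ∑ x, ∑ y, ((E x y - min (z' y) (E x y)) * p x + min (z' y) (E x y) * R x y) :=
          Finset.sum_le_sum fun x _ => Finset.sum_le_sum fun y _ => key2 x y
      _ = ∑ x, ∑ y, (E x y - min (z' y) (E x y)) * p x
          + ∑ x, ∑ y, min (z' y) (E x y) * R x y := by
          rw [← Finset.sum_add_distrib]
          exact Finset.sum_congr rfl fun x _ => Finset.sum_add_distrib
      _ ≤ (1 - ∑ x, ∑ y, p x * min (z' y) (E x y)) + ∑ y, z' y / M := by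
          have h1 : ∑ x, ∑ y, (E x y - min (z' y) (E x y)) * p x
              = 1 - ∑ x, ∑ y, p x * min (z' y) (E x y) := by
            rw [← hps, ← Finset.sum_sub_distrib]
            exact Finset.sum_congr rfl fun x _ => hsum1 x
          rw [h1]
          exact add_le_add le_rfl hsum2
  have hexp : ∑ x, p x * (∑ y, (min (z' y) (E x y) - z' y / M))
      = ∑ x, ∑ y, p x * min (z' y) (E x y) - ∑ y, z' y / M := by
    simp only [Finset.mul_sum, mul_sub, Finset.sum_sub_distrib]
    congr 1
    calc ∑ x, ∑ y, p x * (z' y / M) = ∑ x, p x * ∑ y, z' y / M := by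
          exact Finset.sum_congr rfl fun x _ => (Finset.mul_sum _ _ _).symm
      _ = (∑ x, p x) * ∑ y, z' y / M := (Finset.sum_mul _ _ _).symm
      _ = ∑ y, z' y / M := by rw [hps, one_mul]
  calc m = ∑ x, p x * m := by rw [← Finset.sum_mul, hps, one_mul]
    _ ≤ ∑ x, p x * (∑ y, (min (z' y) (E x y) - z' y / M)) :=
        Finset.sum_le_sum fun x _ => mul_le_mul_of_nonneg_left (hmle x) (hp0 x)
    _ = ∑ x, ∑ y, p x * min (z' y) (E x y) - ∑ y, z' y / M := hexp
    _ ≤ 1 - ∑ x, ∑ y, E x y * R x y := by linarith [hobj]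

end Aux

section Aux2
variable {A B : Type*} [Fintype A] [Fintype B] [Nonempty A]

lemma mul_nonneg_of_np_np {a b : ℝ} (ha : a ≤ 0) (hb : b ≤ 0) : 0 ≤ a * b := by
  nlinarith

lemma lim_aux {D s c0 : ℝ} (h : ∀ η : ℝ, 0 < η → D + η * s < c0) : D ≤ c0 := by
  have h1 : Filter.Tendsto (fun η : ℝ => D + η * s) (nhdsWithin 0 (Set.Ioi 0)) (nhds (D + 0 * s)) :=
    ((continuous_const.add ((continuous_id).mul continuous_const)).tendsto 0).mono_left
      nhdsWithin_le_nhds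
  have h2 : D + 0 * s ≤ c0 :=
    le_of_tendsto h1 (Filter.eventually_iff_exists_mem.2
      ⟨Set.Ioi 0, self_mem_nhdsWithin, fun η hη => (h η hη).le⟩)
  linarith

lemma dir_aux {C L c0 : ℝ} (h : ∀ s : ℝ, 0 < s → C + s * L < c0) : L ≤ 0 := by
  by_contra hL
  push_neg at hL
  have h1 := h 1 one_pos
  have hpos : 0 < (c0 - C) / L := div_pos (by linarith) hL
  have h2 := h _ hpos
  rw [div_mul_cancel₀ _ (ne_of_gt hL)] at h2
  linarith

lemma combo_lt {a b l1 r1 l2 r2 : ℝ} (ha : 0 ≤ a) (hb : 0 ≤ b) (hab : a + b = 1)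
    (h1 : l1 < r1) (h2 : l2 < r2) : a * l1 + b * l2 < a * r1 + b * r2 := by
  rcases eq_or_lt_of_le ha with h | h
  · have hb1 : b = 1 := by linarith
    rw [← h, hb1]; simpa using h2
  · have e1 : a * l1 < a * r1 := by exact (mul_lt_mul_iff_right₀ h).2 h1
    have e2 : b * l2 ≤ b * r2 := mul_le_mul_of_nonneg_left h2.le hb
    linarith

variable [DecidableEq A] [DecidableEq B]

lemma pi_decomp1 (v : B → ℝ) : ∑ y, v y • (Pi.single y (1:ℝ) : B → ℝ) = v := by
  funext y'
  simp [Finset.sum_apply, Pi.single_apply]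

lemma pi_decomp2 (g : A → B → ℝ) :
    ∑ x, ∑ y, g x y • (Pi.single x (Pi.single y (1:ℝ) : B → ℝ) : A → B → ℝ) = g := by
  funext x' y'
  simp [Finset.sum_apply, Pi.single_apply, apply_ite (fun h : B → ℝ => h y')]

/-- Strong duality : near-optimal dual solutions exist. -/
lemma stmt7_strong (E : A → B → ℝ) (hEpos : ∀ x y, 0 ≤ E x y) (hEsum : ∀ x, ∑ y, E x y = 1)
    (M : ℝ) (hM : 1 ≤ M) (c : ℝ)
    (hub : ∀ (R : A → B → ℝ) (p : A → ℝ), (∀ x y, 0 ≤ R x y) → (∀ x, 0 ≤ p x) →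
      (∀ x y, R x y ≤ p x) → (∑ x, p x = 1) → (∀ y, ∑ x, R x y ≤ 1/M) →
      ∑ x, ∑ y, E x y * R x y ≤ c)
    (ε : ℝ) (hε : 0 < ε) :
    ∃ z : B → ℝ, (∀ y, 0 ≤ z y) ∧
      ∀ x0 : A, 1 - c - ε ≤ ∑ y, (min (z y) (E x0 y) - z y / M) := by
  have hM0 : (0:ℝ) < M := lt_of_lt_of_le one_pos hM
  set n : ℝ := (Fintype.card A : ℝ) with hn
  have hn0 : 0 < n := by
    rw [hn]
    exact_mod_cast Fintype.card_pos
  -- the convex open set of strictly-slack perturbed feasible data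
  set Aset : Set ((A → B → ℝ) × ((B → ℝ) × ℝ)) :=
    {w | ∃ R : A → B → ℝ, ∃ p : A → ℝ,
      (∀ x y, 0 ≤ R x y) ∧ (∀ x, 0 ≤ p x) ∧ (∑ x, p x = 1) ∧
      (∀ x y, R x y - p x < w.1 x y) ∧ (∀ y, (∑ x, R x y) - 1/M < w.2.1 y) ∧
      (w.2.2 < ∑ x, ∑ y, E x y * R x y)} with hAset
  have hopen : IsOpen Aset := by
    have hA2 : Aset = ⋃ R : A → B → ℝ, ⋃ p : A → ℝ,
        ⋃ (_ : (∀ x y, 0 ≤ R x y) ∧ (∀ x, 0 ≤ p x) ∧ (∑ x, p x = 1)),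
        ((⋂ x, ⋂ y, {w : (A → B → ℝ) × ((B → ℝ) × ℝ) | R x y - p x < w.1 x y}) ∩
          ((⋂ y, {w : (A → B → ℝ) × ((B → ℝ) × ℝ) | (∑ x, R x y) - 1/M < w.2.1 y}) ∩
            {w : (A → B → ℝ) × ((B → ℝ) × ℝ) | w.2.2 < ∑ x, ∑ y, E x y * R x y})) := by
      ext w
      simp only [hAset, Set.mem_setOf_eq, Set.mem_iUnion, Set.mem_inter_iff, Set.mem_iInter]
      constructor
      · rintro ⟨R, p, h1, h2, h3, h4, h5, h6⟩
        exact ⟨R, p, ⟨h1, h2, h3⟩, h4, h5, h6⟩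
      · rintro ⟨R, p, ⟨h1, h2, h3⟩, h4, h5, h6⟩
        exact ⟨R, p, h1, h2, h3, h4, h5, h6⟩
    rw [hA2]
    refine isOpen_iUnion fun R => isOpen_iUnion fun p => isOpen_iUnion fun _ => ?_
    refine IsOpen.inter ?_ (IsOpen.inter ?_ ?_)
    · exact isOpen_iInter_of_finite fun x => isOpen_iInter_of_finite fun y =>
        isOpen_lt continuous_const
          ((continuous_apply y).comp ((continuous_apply x).comp continuous_fst))
    · exact isOpen_iInter_of_finite fun y =>
        isOpen_lt continuous_const
          ((continuous_apply y).comp (continuous_fst.comp continuous_snd))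
    · exact isOpen_lt (continuous_snd.comp continuous_snd) continuous_const
  have hconv : Convex ℝ Aset := by
    rintro w1 ⟨R1, p1, hR1, hp1, hs1, hu1, hv1, ht1⟩ w2 ⟨R2, p2, hR2, hp2, hs2, hu2, hv2, ht2⟩
      a b ha hb hab
    refine ⟨fun x y => a * R1 x y + b * R2 x y, fun x => a * p1 x + b * p2 x,
      fun x y => add_nonneg (mul_nonneg ha (hR1 x y)) (mul_nonneg hb (hR2 x y)),
      fun x => add_nonneg (mul_nonneg ha (hp1 x)) (mul_nonneg hb (hp2 x)), ?_, ?_, ?_, ?_⟩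
    · simp only [Finset.sum_add_distrib, ← Finset.mul_sum, hs1, hs2]
      linarith
    · intro x y
      have h := combo_lt ha hb hab (hu1 x y) (hu2 x y)
      have e : (a • w1 + b • w2).1 x y = a * w1.1 x y + b * w2.1 x y := by
        simp
      rw [e]
      dsimp only
      linarith [h]
    · intro y
      have h := combo_lt ha hb hab (hv1 y) (hv2 y)
      have e : (a • w1 + b • w2).2.1 y = a * w1.2.1 y + b * w2.2.1 y := by
        simp
      rw [e, Finset.sum_add_distrib, ← Finset.mul_sum, ← Finset.mul_sum]
      have haux : a * (1/M) + b * (1/M) = 1/M := by rw [← add_mul, hab, one_mul]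
      linarith [h, haux]
    · have h := combo_lt ha hb hab ht1 ht2
      have e : (a • w1 + b • w2).2.2 = a * w1.2.2 + b * w2.2.2 := by
        simp
      rw [e]
      have hobj : ∑ x, ∑ y, E x y * (a * R1 x y + b * R2 x y)
          = a * (∑ x, ∑ y, E x y * R1 x y) + b * (∑ x, ∑ y, E x y * R2 x y) := by
        calc ∑ x, ∑ y, E x y * (a * R1 x y + b * R2 x y)
            = ∑ x, ∑ y, (a * (E x y * R1 x y) + b * (E x y * R2 x y)) :=
              Finset.sum_congr rfl fun x _ => Finset.sum_congr rfl fun y _ => by ring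
          _ = a * (∑ x, ∑ y, E x y * R1 x y) + b * (∑ x, ∑ y, E x y * R2 x y) := by
              simp [Finset.sum_add_distrib, Finset.mul_sum]
      rw [hobj]
      exact h
  have hx0 : (((fun _ _ => (0:ℝ)) : A → B → ℝ), ((fun _ => (0:ℝ)) : B → ℝ), c + ε) ∉ Aset := by
    rintro ⟨R, p, hR, hp, hs, hu, hv, ht⟩
    have h1 : ∀ x y, R x y ≤ p x := fun x y => by have := hu x y; simp at this; linarith
    have h2 : ∀ y, ∑ x, R x y ≤ 1/M := fun y => by
      have := hv y; simp at this; rw [one_div]; linarith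
    have := hub R p hR hp h1 hs h2
    simp at ht
    linarith
  obtain ⟨f, hf⟩ := geometric_hahn_banach_open_point hconv hopen hx0
  set lam : A → B → ℝ := fun x y =>
    f ((Pi.single x (Pi.single y (1:ℝ) : B → ℝ) : A → B → ℝ), 0, 0) with hlamdef
  set mu : B → ℝ := fun y => f (0, (Pi.single y (1:ℝ) : B → ℝ), 0) with hmudef
  set bet : ℝ := f (0, 0, 1) with hbetdef
  have hlam_eq : ∀ x y,
      f ((Pi.single x (Pi.single y (1:ℝ) : B → ℝ) : A → B → ℝ), 0, 0) = lam x y :=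
    fun x y => by rw [hlamdef]
  have hmu_eq : ∀ y, f (0, (Pi.single y (1:ℝ) : B → ℝ), 0) = mu y :=
    fun y => by rw [hmudef]
  have decomp : ∀ w : (A → B → ℝ) × ((B → ℝ) × ℝ),
      f w = (∑ x, ∑ y, w.1 x y * lam x y) + (∑ y, w.2.1 y * mu y) + w.2.2 * bet := by
    intro w
    have hsplit : w = ((w.1, 0, 0) : (A → B → ℝ) × ((B → ℝ) × ℝ))
        + ((0, w.2.1, 0) : (A → B → ℝ) × ((B → ℝ) × ℝ))
        + ((0, 0, w.2.2) : (A → B → ℝ) × ((B → ℝ) × ℝ)) := by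
      refine Prod.ext ?_ (Prod.ext ?_ ?_) <;> simp
    have h1 : f ((w.1, 0, 0) : (A → B → ℝ) × ((B → ℝ) × ℝ))
        = ∑ x, ∑ y, w.1 x y * lam x y := by
      have hrep : ((w.1, 0, 0) : (A → B → ℝ) × ((B → ℝ) × ℝ))
          = ∑ x, ∑ y, w.1 x y •
            (((Pi.single x (Pi.single y (1:ℝ) : B → ℝ) : A → B → ℝ),
              (0 : B → ℝ), (0:ℝ)) : (A → B → ℝ) × ((B → ℝ) × ℝ)) := by
        refine Prod.ext ?_ (Prod.ext ?_ ?_) <;>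
          simp [Prod.fst_sum, Prod.snd_sum, pi_decomp2]
      rw [hrep, map_sum]
      refine Finset.sum_congr rfl fun x _ => ?_
      rw [map_sum]
      refine Finset.sum_congr rfl fun y _ => ?_
      rw [map_smul, smul_eq_mul, hlam_eq]
    have h2 : f ((0, w.2.1, 0) : (A → B → ℝ) × ((B → ℝ) × ℝ))
        = ∑ y, w.2.1 y * mu y := by
      have hrep : ((0, w.2.1, 0) : (A → B → ℝ) × ((B → ℝ) × ℝ))
          = ∑ y, w.2.1 y •
            (((0 : A → B → ℝ), (Pi.single y (1:ℝ) : B → ℝ), (0:ℝ))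
              : (A → B → ℝ) × ((B → ℝ) × ℝ)) := by
        refine Prod.ext ?_ (Prod.ext ?_ ?_) <;>
          simp [Prod.fst_sum, Prod.snd_sum, pi_decomp1]
      rw [hrep, map_sum]
      refine Finset.sum_congr rfl fun y _ => ?_
      rw [map_smul, smul_eq_mul, hmu_eq]
    have h3 : f ((0, 0, w.2.2) : (A → B → ℝ) × ((B → ℝ) × ℝ)) = w.2.2 * bet := by
      have hrep : ((0, 0, w.2.2) : (A → B → ℝ) × ((B → ℝ) × ℝ))
          = w.2.2 • (((0 : A → B → ℝ), (0 : B → ℝ), (1:ℝ))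
              : (A → B → ℝ) × ((B → ℝ) × ℝ)) := by
        refine Prod.ext ?_ (Prod.ext ?_ ?_) <;> simp
      rw [hrep, map_smul, smul_eq_mul, hbetdef]
    calc f w = f (((w.1, 0, 0) : (A → B → ℝ) × ((B → ℝ) × ℝ))
          + ((0, w.2.1, 0) : (A → B → ℝ) × ((B → ℝ) × ℝ))
          + ((0, 0, w.2.2) : (A → B → ℝ) × ((B → ℝ) × ℝ))) := by rw [← hsplit]
      _ = (∑ x, ∑ y, w.1 x y * lam x y) + (∑ y, w.2.1 y * mu y) + w.2.2 * bet := by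
          rw [map_add, map_add, h1, h2, h3]
  have hfx0 : f (((fun _ _ => (0:ℝ)) : A → B → ℝ), ((fun _ => (0:ℝ)) : B → ℝ), c + ε)
      = (c + ε) * bet := by
    rw [decomp]; simp
  have hf' : ∀ a ∈ Aset, f a < (c + ε) * bet := fun a ha => by
    rw [← hfx0]; exact hf a ha
  -- base point of Aset
  set a0 : (A → B → ℝ) × ((B → ℝ) × ℝ) :=
    (((fun _ _ => (1:ℝ)) : A → B → ℝ), ((fun _ => (1:ℝ)) : B → ℝ), (-1:ℝ)) with ha0def
  have hinvn : 0 < 1/n := by positivity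
  have hinvM : 0 < 1/M := by positivity
  have hinvM' : (0:ℝ) < M⁻¹ := inv_pos.2 hM0
  have hinvn' : (0:ℝ) < n⁻¹ := inv_pos.2 hn0
  have hpsum : ∑ _x : A, 1/n = 1 := by
    rw [Finset.sum_const, nsmul_eq_mul, Finset.card_univ, ← hn, mul_one_div_cancel hn0.ne']
  have ha0 : a0 ∈ Aset := by
    refine ⟨fun _ _ => 0, fun _ => 1/n, fun _ _ => le_refl 0, fun _ => hinvn.le, hpsum,
      ?_, ?_, ?_⟩
    · intro x y; show (0:ℝ) - 1/n < 1; linarith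
    · intro y; show (∑ _x : A, (0:ℝ)) - 1/M < 1; simp; linarith
    · show (-1:ℝ) < ∑ x, ∑ y, E x y * 0; simp
  have hsingle_nonneg : ∀ (x : A) (y : B) (x' : A) (y' : B),
      0 ≤ (Pi.single x (Pi.single y (1:ℝ) : B → ℝ) : A → B → ℝ) x' y' := by
    intro x y x' y'
    simp only [Pi.single_apply, apply_ite (fun h : B → ℝ => h y'), Pi.zero_apply]
    split_ifs <;> norm_num
  -- sign of the multipliers
  have hlam_le : ∀ x y, lam x y ≤ 0 := by
    intro x y
    refine dir_aux (C := f a0) (c0 := (c + ε) * bet) (fun s hs => ?_)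
    have hmem : a0 + s • (((Pi.single x (Pi.single y (1:ℝ) : B → ℝ) : A → B → ℝ),
        (0 : B → ℝ), (0:ℝ)) : (A → B → ℝ) × ((B → ℝ) × ℝ)) ∈ Aset := by
      refine ⟨fun _ _ => 0, fun _ => 1/n, fun _ _ => le_refl 0, fun _ => hinvn.le, hpsum,
        ?_, ?_, ?_⟩
      · intro x' y'
        show (0:ℝ) - 1/n < 1 + s * (Pi.single x (Pi.single y (1:ℝ) : B → ℝ) : A → B → ℝ) x' y'
        have := mul_nonneg hs.le (hsingle_nonneg x y x' y')
        linarith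
      · intro y'
        show (∑ _x : A, (0:ℝ)) - 1/M < 1 + s * 0
        simp; linarith
      · show (-1:ℝ) + s * 0 < ∑ x, ∑ y, E x y * 0
        simp
    have h2 := hf' _ hmem
    rwa [map_add, map_smul, smul_eq_mul, hlam_eq] at h2
  have hmu_le : ∀ y, mu y ≤ 0 := by
    intro y
    refine dir_aux (C := f a0) (c0 := (c + ε) * bet) (fun s hs => ?_)
    have hmem : a0 + s • (((0 : A → B → ℝ), (Pi.single y (1:ℝ) : B → ℝ), (0:ℝ))
        : (A → B → ℝ) × ((B → ℝ) × ℝ)) ∈ Aset := by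
      refine ⟨fun _ _ => 0, fun _ => 1/n, fun _ _ => le_refl 0, fun _ => hinvn.le, hpsum,
        ?_, ?_, ?_⟩
      · intro x' y'
        show (0:ℝ) - 1/n < 1 + s * 0
        simp; linarith
      · intro y'
        show (∑ _x : A, (0:ℝ)) - 1/M < 1 + s * (Pi.single y (1:ℝ) : B → ℝ) y'
        have h0 : (0:ℝ) ≤ (Pi.single y (1:ℝ) : B → ℝ) y' := by
          simp only [Pi.single_apply]; split_ifs <;> norm_num
        have := mul_nonneg hs.le h0
        simp only [Finset.sum_const_zero]
        linarith
      · show (-1:ℝ) + s * 0 < ∑ x, ∑ y, E x y * 0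
        simp
    have h2 := hf' _ hmem
    rwa [map_add, map_smul, smul_eq_mul, hmu_eq] at h2
  have hbet0 : 0 ≤ bet := by
    have hneg : f (((0 : A → B → ℝ), (0 : B → ℝ), (-1:ℝ))
        : (A → B → ℝ) × ((B → ℝ) × ℝ)) = -bet := by
      rw [decomp]; simp
    have h0 : f (((0 : A → B → ℝ), (0 : B → ℝ), (-1:ℝ))
        : (A → B → ℝ) × ((B → ℝ) × ℝ)) ≤ 0 := by
      refine dir_aux (C := f a0) (c0 := (c + ε) * bet) (fun s hs => ?_)
      have hmem : a0 + s • (((0 : A → B → ℝ), (0 : B → ℝ), (-1:ℝ))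
          : (A → B → ℝ) × ((B → ℝ) × ℝ)) ∈ Aset := by
        refine ⟨fun _ _ => 0, fun _ => 1/n, fun _ _ => le_refl 0, fun _ => hinvn.le, hpsum,
          ?_, ?_, ?_⟩
        · intro x' y'
          show (0:ℝ) - 1/n < 1 + s * 0
          simp; linarith
        · intro y'
          show (∑ _x : A, (0:ℝ)) - 1/M < 1 + s * 0
          simp; linarith
        · show (-1:ℝ) + s * (-1) < ∑ x, ∑ y, E x y * 0
          simp; linarith
      have h2 := hf' _ hmem
      rwa [map_add, map_smul, smul_eq_mul] at h2
    rw [hneg] at h0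
    linarith
  -- the key Lagrangian inequality
  have hkey : ∀ (R : A → B → ℝ) (p : A → ℝ), (∀ x y, 0 ≤ R x y) → (∀ x, 0 ≤ p x) →
      (∑ x, p x = 1) →
      (∑ x, ∑ y, (R x y - p x) * lam x y) + (∑ y, ((∑ x, R x y) - 1/M) * mu y)
        + (∑ x, ∑ y, E x y * R x y) * bet ≤ (c + ε) * bet := by
    intro R p hR hp hs
    refine lim_aux (s := (∑ x, ∑ y, lam x y) + (∑ y, mu y) - bet) (fun η hη => ?_)
    have hmem : ((fun x y => R x y - p x + η, fun y => (∑ x, R x y) - 1/M + η,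
        (∑ x, ∑ y, E x y * R x y) - η) : (A → B → ℝ) × ((B → ℝ) × ℝ)) ∈ Aset := by
      refine ⟨R, p, hR, hp, hs, ?_, ?_, ?_⟩
      · intro x y; dsimp only; linarith
      · intro y; dsimp only; linarith
      · dsimp only; linarith
    have h2 := hf' _ hmem
    rw [decomp] at h2
    dsimp only at h2
    have e1 : ∑ x, ∑ y, (R x y - p x + η) * lam x y
        = (∑ x, ∑ y, (R x y - p x) * lam x y) + η * (∑ x, ∑ y, lam x y) := by
      simp only [add_mul, Finset.sum_add_distrib, Finset.mul_sum]
    have e2 : ∑ y, ((∑ x, R x y) - 1/M + η) * mu y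
        = (∑ y, ((∑ x, R x y) - 1/M) * mu y) + η * (∑ y, mu y) := by
      simp only [add_mul, Finset.sum_add_distrib, Finset.mul_sum]
    have e3 : ((∑ x, ∑ y, E x y * R x y) - η) * bet
        = (∑ x, ∑ y, E x y * R x y) * bet - η * bet := by ring
    rw [e1, e2, e3] at h2
    linarith
  -- the multiplier of the objective is positive
  have hbet_ne : bet ≠ 0 := by
    intro hb0
    set δ : ℝ := 1/(2*n*M) with hδ
    have hδ0 : 0 < δ := by rw [hδ]; positivity
    have hδn : δ - 1/n < 0 := by
      rw [hδ]
      have h1 : 1/(2*n*M) ≤ 1/(2*n) := by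
        apply div_le_div_of_nonneg_left one_pos.le (by positivity)
        nlinarith
      have h2 : 1/(2*n) < 1/n := by
        apply div_lt_div_of_pos_left one_pos hn0
        linarith
      linarith
    have hsumδ : (∑ _x : A, δ) = 1/(2*M) := by
      rw [Finset.sum_const, nsmul_eq_mul, Finset.card_univ, ← hn, hδ]
      field_simp
    have hk := hkey (fun _ _ => δ) (fun _ => 1/n) (fun _ _ => hδ0.le) (fun _ => hinvn.le)
      hpsum
    rw [hb0, mul_zero, mul_zero] at hk
    simp only [add_zero, hsumδ] at hk
    -- both sums are nonnegative and their sum is ≤ 0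
    have hS1 : ∀ x : A, ∀ y : B, 0 ≤ (δ - 1/n) * lam x y :=
      fun x y => mul_nonneg_of_np_np hδn.le (hlam_le x y)
    have hS2 : ∀ y : B, 0 ≤ (1/(2*M) - 1/M) * mu y := by
      intro y
      apply mul_nonneg_of_np_np _ (hmu_le y)
      have : 1/(2*M) < 1/M := by
        apply div_lt_div_of_pos_left one_pos hM0
        linarith
      linarith
    have hS1sum : 0 ≤ ∑ x, ∑ y, (δ - 1/n) * lam x y :=
      Finset.sum_nonneg fun x _ => Finset.sum_nonneg fun y _ => hS1 x y
    have hS2sum : 0 ≤ ∑ y, (1/(2*M) - 1/M) * mu y :=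
      Finset.sum_nonneg fun y _ => hS2 y
    have hS1z : ∑ x, ∑ y, (δ - 1/n) * lam x y = 0 := le_antisymm (by linarith) hS1sum
    have hS2z : ∑ y, (1/(2*M) - 1/M) * mu y = 0 := le_antisymm (by linarith) hS2sum
    have hlam0 : ∀ x y, lam x y = 0 := by
      intro x y
      have hx := (Finset.sum_eq_zero_iff_of_nonneg
        (fun x _ => Finset.sum_nonneg fun y _ => hS1 x y)).1 hS1z x (Finset.mem_univ x)
      have hy := (Finset.sum_eq_zero_iff_of_nonneg (fun y _ => hS1 x y)).1 hx y
        (Finset.mem_univ y)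
      rcases mul_eq_zero.1 hy with h | h
      · exact absurd h hδn.ne
      · exact h
    have hmu0 : ∀ y, mu y = 0 := by
      intro y
      have hy := (Finset.sum_eq_zero_iff_of_nonneg (fun y _ => hS2 y)).1 hS2z y
        (Finset.mem_univ y)
      rcases mul_eq_zero.1 hy with h | h
      · have : 1/(2*M) < 1/M := by
          apply div_lt_div_of_pos_left one_pos hM0
          linarith
        exact absurd h (by linarith)
      · exact h
    have hfa0 : f a0 = 0 := by
      rw [decomp, ha0def]
      simp [hlam0, hmu0, hb0]
    have := hf' a0 ha0
    rw [hfa0, hb0, mul_zero] at this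
    exact lt_irrefl 0 this
  have hbet_pos : 0 < bet := lt_of_le_of_ne hbet0 (Ne.symm hbet_ne)
  -- the dual solution
  set z : B → ℝ := fun y => -mu y / bet with hzdef
  have hz0 : ∀ y, 0 ≤ z y := fun y =>
    div_nonneg (neg_nonneg.2 (hmu_le y)) hbet_pos.le
  have hmu_z : ∀ y, mu y = -(z y * bet) := by
    intro y
    rw [hzdef]
    field_simp
  refine ⟨z, hz0, fun x0 => ?_⟩
  classical
  set q : B → ℝ := fun y => if z y < E x0 y then (1:ℝ) else 0 with hqdef
  set R0 : A → B → ℝ := fun x y => if x = x0 then q y else 0 with hR0def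
  set p0 : A → ℝ := fun x => if x = x0 then (1:ℝ) else 0 with hp0def
  have hq01 : ∀ y, 0 ≤ q y ∧ q y ≤ 1 := by
    intro y
    rw [hqdef]
    dsimp only
    split_ifs <;> norm_num
  have hk := hkey R0 p0
    (fun x y => by rw [hR0def]; dsimp only; split_ifs; exacts [(hq01 y).1, le_refl 0])
    (fun x => by rw [hp0def]; dsimp only; split_ifs <;> norm_num)
    (by rw [hp0def]; simp)
  -- the first sum is nonnegative
  have hT1 : 0 ≤ ∑ x, ∑ y, (R0 x y - p0 x) * lam x y := by
    refine Finset.sum_nonneg fun x _ => Finset.sum_nonneg fun y _ => ?_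
    refine mul_nonneg_of_np_np ?_ (hlam_le x y)
    rw [hR0def, hp0def]
    dsimp only
    split_ifs
    · linarith [(hq01 y).2]
    · linarith
  -- compute the second and third sums
  have hT2 : ∀ y, (∑ x, R0 x y) = q y := by
    intro y
    rw [hR0def]
    simp [Finset.sum_ite_eq']
  have hT3 : ∑ x, ∑ y, E x y * R0 x y = ∑ y, q y * E x0 y := by
    rw [Finset.sum_comm, hR0def]
    refine Finset.sum_congr rfl fun y _ => ?_
    simp [mul_ite, Finset.sum_ite_eq', mul_comm]
  simp only [hT2, hT3] at hk
  -- divide by bet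
  have hdiv : (∑ y, q y * E x0 y) - ∑ y, (q y - 1/M) * z y ≤ c + ε := by
    have hlhs : ((∑ y, q y * E x0 y) - ∑ y, (q y - 1/M) * z y) * bet
        ≤ (c + ε) * bet := by
      have e4 : ∑ y, (q y - 1/M) * mu y = -((∑ y, (q y - 1/M) * z y) * bet) := by
        rw [Finset.sum_mul, ← Finset.sum_neg_distrib]
        refine Finset.sum_congr rfl fun y _ => ?_
        rw [hmu_z y]
        ring
      have e5 : ((∑ y, q y * E x0 y) - ∑ y, (q y - 1/M) * z y) * bet
          = (∑ y, q y * E x0 y) * bet - (∑ y, (q y - 1/M) * z y) * bet := by ring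
      rw [e5]
      rw [e4] at hk
      linarith
    exact le_of_mul_le_mul_right hlhs hbet_pos
  -- translate into the dual objective
  have hmin : ∀ y, min (z y) (E x0 y) - z y / M
      = E x0 y - (q y * (E x0 y - z y) + z y / M) := by
    intro y
    rw [hqdef]
    dsimp only
    rcases lt_or_ge (z y) (E x0 y) with h | h
    · rw [if_pos h, min_eq_left h.le]; ring
    · rw [if_neg (not_lt.2 h), min_eq_right h]; ring
  have hfinal : (1:ℝ) - (c + ε) ≤ ∑ y, (min (z y) (E x0 y) - z y / M) := by
    have e6 : ∑ y, (min (z y) (E x0 y) - z y / M)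
        = ∑ y, (E x0 y - (q y * (E x0 y - z y) + z y / M)) :=
      Finset.sum_congr rfl fun y _ => hmin y
    have e7 : ∑ y, (E x0 y - (q y * (E x0 y - z y) + z y / M))
        = 1 - ∑ y, (q y * (E x0 y - z y) + z y / M) := by
      rw [Finset.sum_sub_distrib, hEsum x0]
    have e8 : ∑ y, (q y * (E x0 y - z y) + z y / M)
        = (∑ y, q y * E x0 y) - ∑ y, (q y - 1/M) * z y := by
      rw [← Finset.sum_sub_distrib]
      refine Finset.sum_congr rfl fun y _ => ?_
      ring
    rw [e6, e7, e8]
    linarith [hdiv]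
  linarith [hfinal]

end Aux2

/-- LP duality for the minimum error probability of
non-signalling codes of size `M`:
`min (1 - ∑ E·R)` over primal-feasible `(R,p)` equals
`max_z min_x ∑_y (min{z_y, E(y|x)} - z_y/M)`. -/
theorem stmt7 {A B : Type*} [Fintype A] [Fintype B] [Nonempty A]
    (E : A → B → ℝ) (hEpos : ∀ x y, 0 ≤ E x y) (hEsum : ∀ x, ∑ y, E x y = 1)
    (M : ℝ) (hM : 1 ≤ M) :
    sInf {e : ℝ | ∃ (R : A → B → ℝ) (p : A → ℝ),
        (∀ x y, 0 ≤ R x y) ∧ (∀ x, 0 ≤ p x) ∧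
        (∀ x y, R x y ≤ p x) ∧ (∑ x, p x = 1) ∧
        (∀ y, ∑ x, R x y ≤ 1 / M) ∧
        e = 1 - ∑ x, ∑ y, E x y * R x y}
    = sSup {v : ℝ | ∃ z : B → ℝ,
        v = ⨅ x : A, ∑ y, (min (z y) (E x y) - z y / M)} := by
  classical
  set S : Set ℝ := {e : ℝ | ∃ (R : A → B → ℝ) (p : A → ℝ),
      (∀ x y, 0 ≤ R x y) ∧ (∀ x, 0 ≤ p x) ∧
      (∀ x y, R x y ≤ p x) ∧ (∑ x, p x = 1) ∧
      (∀ y, ∑ x, R x y ≤ 1 / M) ∧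
      e = 1 - ∑ x, ∑ y, E x y * R x y} with hSdef
  set T : Set ℝ := {v : ℝ | ∃ z : B → ℝ,
      v = ⨅ x : A, ∑ y, (min (z y) (E x y) - z y / M)} with hTdef
  have hn0 : (0:ℝ) < (Fintype.card A : ℝ) := by exact_mod_cast Fintype.card_pos
  have hpsum : ∑ _x : A, ((Fintype.card A : ℝ))⁻¹ = 1 := by
    rw [Finset.sum_const, nsmul_eq_mul, Finset.card_univ, mul_inv_cancel₀ hn0.ne']
  have hMinv : 0 ≤ 1/M := by positivity
  have h1S : (1:ℝ) ∈ S := by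
    refine ⟨fun _ _ => 0, fun _ => ((Fintype.card A : ℝ))⁻¹, fun _ _ => le_refl 0,
      fun _ => by positivity, fun x y => by positivity, hpsum, fun y => by simpa using hMinv, ?_⟩
    simp
  have hSne : S.Nonempty := ⟨1, h1S⟩
  have hSlb : ∀ e ∈ S, (0:ℝ) ≤ e := by
    rintro e ⟨R, p, hR, hp, hRp, hps, hRM, rfl⟩
    have hle : ∑ x, ∑ y, E x y * R x y ≤ 1 := by
      calc ∑ x, ∑ y, E x y * R x y
          ≤ ∑ x, ∑ y, E x y * p x :=
            Finset.sum_le_sum fun x _ => Finset.sum_le_sum fun y _ =>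
              mul_le_mul_of_nonneg_left (hRp x y) (hEpos x y)
        _ = ∑ x, p x := by
            refine Finset.sum_congr rfl fun x _ => ?_
            rw [← Finset.sum_mul, hEsum x, one_mul]
        _ = 1 := hps
    linarith
  have hbddS : BddBelow S := ⟨0, hSlb⟩
  have hTne : T.Nonempty := ⟨_, ⟨fun _ => 0, rfl⟩⟩
  have hweak : ∀ v ∈ T, ∀ e ∈ S, v ≤ e := by
    rintro v ⟨z, rfl⟩ e ⟨R, p, hR, hp, hRp, hps, hRM, rfl⟩
    exact stmt7_weak E hEpos hEsum M hM z R p hR hp hRp hps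
      (fun y => by simpa using hRM y)
  have hbddT : BddAbove T := ⟨1, fun v hv => hweak v hv 1 h1S⟩
  refine le_antisymm ?_ (csSup_le hTne fun v hv => le_csInf hSne fun e he => hweak v hv e he)
  refine le_of_forall_pos_le_add fun ε hε => ?_
  have hub : ∀ (R : A → B → ℝ) (p : A → ℝ), (∀ x y, 0 ≤ R x y) → (∀ x, 0 ≤ p x) →
      (∀ x y, R x y ≤ p x) → (∑ x, p x = 1) → (∀ y, ∑ x, R x y ≤ 1/M) →
      ∑ x, ∑ y, E x y * R x y ≤ 1 - sInf S := by
    intro R p hR hp hRp hps hRM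
    have hmem : (1 - ∑ x, ∑ y, E x y * R x y) ∈ S := ⟨R, p, hR, hp, hRp, hps, hRM, rfl⟩
    have := csInf_le hbddS hmem
    linarith
  obtain ⟨z, hz0, hzb⟩ := stmt7_strong E hEpos hEsum M hM (1 - sInf S) hub ε hε
  have hvT : (⨅ x : A, ∑ y, (min (z y) (E x y) - z y / M)) ∈ T := ⟨z, rfl⟩
  have h1 : sInf S - ε ≤ ⨅ x : A, ∑ y, (min (z y) (E x y) - z y / M) :=
    le_ciInf fun x0 => by have := hzb x0; linarith
  have h2 : (⨅ x : A, ∑ y, (min (z y) (E x y) - z y / M)) ≤ sSup T :=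
    le_csSup hbddT hvT
  linarith
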